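/- Let R be a ring, M a left R-module, E = End_R(M), and α ∈ E. Then the following are equivalent: (1) α is strongly J^#-clean in E; (2) there exists a direct sum decomposition M = P ⊕ Q of left R-modules such that P and Q are α-invariant, α restricted to P lies in J^#(End_R(P)), and (1_M − α) restricted to Q lies in J^#(End_R(Q)). -/

import Mathlib

open Polynomial

universe u

/-- The Jacobson radical of a ring: the intersection of all maximal (left) ideals. -/
def jacobsonRadical (R : Type*) [Ring R] : Ideal R := Ideal.jacobson (⊥ : Ideal R)

/-- `J^#(R) = {x ∈ R : x ^ n ∈ J(R) for some n ∈ ℕ}`. -/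
def Jsharp (R : Type*) [Ring R] : Set R :=
  {x | ∃ n : ℕ, 0 < n ∧ x ^ n ∈ jacobsonRadical R}

/-- An element `a` is strongly `J^#`-clean if `a = e + u` with `e` idempotent,
`u ∈ J^#(R)` and `e * a = a * e`. -/
def IsStronglyJsharpClean {R : Type*} [Ring R] (a : R) : Prop :=
  ∃ e : R, IsIdempotentElem e ∧ a - e ∈ Jsharp R ∧ e * a = a * e

/-- A commutative ring is projective-free if every finitely generated projective
module is free. -/
def IsProjectiveFree (R : Type u) [CommRing R] : Prop :=
  ∀ (M : Type u) [AddCommGroup M] [Module R M],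
    Module.Finite R M → Module.Projective R M → Module.Free R M

/-- `𝕁_r`: monic polynomials congruent to `(t - r) ^ deg f` modulo `J^#(R)`. -/
def Jpoly {R : Type*} [CommRing R] (r : R) : Set R[X] :=
  {f | f.Monic ∧ ∀ i, (f - (X - C r) ^ f.natDegree).coeff i ∈ Jsharp R}

section RingLemmas
variable {S : Type*} [Ring S]

lemma mem_jacobsonRadical_iff {x : S} :
    x ∈ jacobsonRadical S ↔ ∀ y : S, IsUnit (y * x + 1) := by
  rw [jacobsonRadical, Ideal.mem_jacobson_iff]
  constructor
  · intro h y
    obtain ⟨z, hz⟩ := h y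
    rw [Ideal.mem_bot, sub_eq_zero] at hz
    have h1 : z * (y * x + 1) = 1 := by
      rw [mul_add, mul_one, ← mul_assoc, hz]
    obtain ⟨w, hw⟩ := h (-(z * y))
    rw [Ideal.mem_bot, sub_eq_zero] at hw
    have h2 : w * z = 1 := by
      have hz' : z = -(z * y) * x + 1 := by
        have : z * y * x + z = 1 := hz
        rw [neg_mul, mul_assoc]
        linear_combination (norm := noncomm_ring) hz
      rw [hz']
      rw [mul_add, mul_one, ← mul_assoc, hw]
    have h3 : y * x + 1 = w := by
      calc y * x + 1 = (w * z) * (y * x + 1) := by rw [h2, one_mul]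
        _ = w * (z * (y * x + 1)) := by rw [mul_assoc]
        _ = w := by rw [h1, mul_one]
    exact ⟨⟨y * x + 1, z, by rw [h3, h2], h1⟩, rfl⟩
  · intro h y
    obtain ⟨u, hu⟩ := h y
    refine ⟨↑u⁻¹, ?_⟩
    rw [Ideal.mem_bot, sub_eq_zero]
    have : (↑u⁻¹ : S) * (y * x + 1) = 1 := by rw [← hu]; exact u.inv_mul
    rw [← this, mul_add, mul_one, ← mul_assoc]

lemma isUnit_one_add_swap {a b : S} (h : IsUnit (1 + a * b)) : IsUnit (1 + b * a) := by
  obtain ⟨u, hu⟩ := h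
  set c : S := ↑u⁻¹ with hc
  have h1 : (1 + a * b) * c = 1 := by rw [← hu]; exact u.mul_inv
  have h2 : c * (1 + a * b) = 1 := by rw [← hu]; exact u.inv_mul
  refine ⟨⟨1 + b * a, 1 - b * (c * a), ?_, ?_⟩, rfl⟩
  · have key : c + a * b * c = 1 := by
      calc c + a * b * c = (1 + a * b) * c := by noncomm_ring
        _ = 1 := h1
    calc (1 + b * a) * (1 - b * (c * a))
        = 1 + b * a - b * ((c + a * b * c) * a) := by noncomm_ring
      _ = 1 := by rw [key]; noncomm_ring
  · have key : c + c * (a * b) = 1 := by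
      calc c + c * (a * b) = c * (1 + a * b) := by noncomm_ring
        _ = 1 := h2
    calc (1 - b * (c * a)) * (1 + b * a)
        = 1 + b * a - b * ((c + c * (a * b)) * a) := by noncomm_ring
      _ = 1 := by rw [key]; noncomm_ring

end RingLemmas

section ModuleLemmas
variable {R M : Type*} [Ring R] [AddCommGroup M] [Module R M]

lemma ext_on_compl {P Q : Submodule R M} (h : IsCompl P Q)
    {f g : Module.End R M} (h1 : ∀ x ∈ P, f x = g x) (h2 : ∀ x ∈ Q, f x = g x) : f = g := by
  ext x
  obtain ⟨u, v, huv, -⟩ := Submodule.existsUnique_add_of_isCompl h x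
  rw [← huv, map_add, map_add, h1 u u.2, h2 v v.2]

lemma restrict_eq_restrict {p : Submodule R M}
    {f g : Module.End R M} (hf : ∀ x ∈ p, f x ∈ p) (hg : ∀ x ∈ p, g x ∈ p)
    (h : ∀ x ∈ p, f x = g x) : f.restrict hf = g.restrict hg := by
  ext x
  exact h ↑x x.2

-- corner extension lemma
lemma mem_jac_of_corner {P Q : Submodule R M} (h : IsCompl P Q)
    {w : Module.End R M} (hw : ∀ x, w x ∈ P) (hwQ : ∀ x ∈ Q, w x = 0)
    (hres : w.restrict (fun x _ => hw x) ∈ jacobsonRadical (Module.End R P)) :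
    w ∈ jacobsonRadical (Module.End R M) := by
  rw [mem_jacobsonRadical_iff]
  intro y
  set π : M →ₗ[R] P := P.linearProjOfIsCompl Q h with hπ
  set p : Module.End R M := P.subtype ∘ₗ π with hp
  have hpP : ∀ x ∈ P, p x = x := fun x hx => by
    simp [Submodule.linearProjOfIsCompl, hp, hπ, Submodule.projectionOnto_apply_of_mem_left h hx, Submodule.projection_apply_of_mem_left h hx]
  have hpQ : ∀ x ∈ Q, p x = 0 := fun x hx => by
    simp [Submodule.linearProjOfIsCompl, hp, hπ, Submodule.projectionOnto_apply_of_mem_right h hx, Submodule.projection_apply_of_mem_right h hx]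
  have hwp : w * p = w := by
    refine ext_on_compl h (fun x hx => ?_) (fun x hx => ?_)
    · rw [Module.End.mul_apply, hpP x hx]
    · rw [Module.End.mul_apply, hpQ x hx, map_zero, hwQ x hx]
  set c : Module.End R M := p * (y * w) with hcdef
  have hcP : ∀ x, c x ∈ P := fun x => (π _).2
  have hcQ : ∀ x ∈ Q, c x = 0 := fun x hx => by
    simp [hcdef, Module.End.mul_apply, hwQ x hx]
  -- the restriction of c to P lies in the radical
  have hpyP : ∀ x ∈ P, (p * y) x ∈ P := fun x _ => (π _).2
  have hcres : c.restrict (fun x _ => hcP x) ∈ jacobsonRadical (Module.End R P) := by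
    have : c.restrict (fun x _ => hcP x)
        = ((p * y).restrict hpyP) * (w.restrict (fun x _ => hw x)) := by
      ext x; rfl
    rw [this]
    exact Ideal.mul_mem_left _ _ hres
  set cr : Module.End R P := c.restrict (fun x _ => hcP x) with hcr
  have hcru : IsUnit (1 + cr) := by
    have := mem_jacobsonRadical_iff.1 hcres 1
    rwa [one_mul, add_comm] at this
  obtain ⟨t, ht⟩ := hcru
  set t' : Module.End R P := ↑t⁻¹ with ht'
  have ht1 : (1 + cr) * t' = 1 := by rw [← ht]; exact t.mul_inv
  have ht2 : t' * (1 + cr) = 1 := by rw [← ht]; exact t.inv_mul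
  set T : Module.End R M := 1 + P.subtype ∘ₗ ((t' - 1) ∘ₗ π) with hT
  -- pointwise facts
  have hTQ : ∀ x ∈ Q, T x = x := fun x hx => by
    simp [Submodule.linearProjOfIsCompl, hT, hπ, Submodule.projectionOnto_apply_of_mem_right h hx, Submodule.projection_apply_of_mem_right h hx]
  have hTP : ∀ v : P, T ↑v = ↑(t' v) := fun v => by
    simp [Submodule.linearProjOfIsCompl, hT, hπ, Submodule.projectionOnto_apply_left h v, Submodule.projection_apply_left h v, LinearMap.sub_apply]
  have hCP : ∀ v : P, (1 + c) ↑v = ↑((1 + cr) v) := fun v => by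
    simp [hcr, LinearMap.restrict_apply]
  have e1 : (1 + c) * T = 1 := by
    refine ext_on_compl h (fun x hx => ?_) (fun x hx => ?_)
    · rw [Module.End.mul_apply, Module.End.one_apply]
      rw [show x = ((⟨x, hx⟩ : P) : M) from rfl, hTP, hCP]
      rw [show (1 + cr) (t' ⟨x, hx⟩) = ((1 + cr) * t') ⟨x, hx⟩ from rfl, ht1]
      rfl
    · rw [Module.End.mul_apply, Module.End.one_apply, hTQ x hx, LinearMap.add_apply,
        Module.End.one_apply, hcQ x hx, add_zero]
  have e2 : T * (1 + c) = 1 := by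
    refine ext_on_compl h (fun x hx => ?_) (fun x hx => ?_)
    · rw [Module.End.mul_apply, Module.End.one_apply]
      rw [show x = ((⟨x, hx⟩ : P) : M) from rfl, hCP, hTP]
      rw [show t' ((1 + cr) ⟨x, hx⟩) = (t' * (1 + cr)) ⟨x, hx⟩ from rfl, ht2]
      rfl
    · have hx' : (1 + c) x = x := by
        rw [LinearMap.add_apply, Module.End.one_apply, hcQ x hx, add_zero]
      rw [Module.End.mul_apply, Module.End.one_apply, hx', hTQ x hx]
  have hu1 : IsUnit (1 + c) := ⟨⟨1 + c, T, e1, e2⟩, rfl⟩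
  have hu2 : IsUnit (1 + (y * w) * p) := by
    rw [hcdef] at hu1
    exact isUnit_one_add_swap hu1
  rw [mul_assoc, show w * p = w from hwp] at hu2
  rwa [add_comm] at hu2

end ModuleLemmas

section CoreLemmas
variable {R M : Type*} [Ring R] [AddCommGroup M] [Module R M]

lemma restrict_mem_jac {f u : Module.End R M} (hf : IsIdempotentElem f)
    (hu : u ∈ jacobsonRadical (Module.End R M))
    (hP : ∀ x ∈ LinearMap.ker f, u x ∈ LinearMap.ker f) :
    u.restrict hP ∈ jacobsonRadical (Module.End R (LinearMap.ker f)) := by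
  set P := LinearMap.ker f with hPdef
  rw [mem_jacobsonRadical_iff]
  intro y
  have hcod : ∀ x : M, (1 - f) x ∈ P := fun x => by
    rw [hPdef, LinearMap.mem_ker, LinearMap.sub_apply, Module.End.one_apply, map_sub,
      ← Module.End.mul_apply, hf.eq, sub_self]
  set Y : Module.End R M := P.subtype ∘ₗ (y ∘ₗ ((1 - f).codRestrict P hcod)) with hydef
  have hyP : ∀ (x : M) (hx : x ∈ P), Y x = ↑(y ⟨x, hx⟩) := by
    intro x hx
    have h1 : (1 - f) x = x := by
      rw [LinearMap.sub_apply, Module.End.one_apply, (LinearMap.mem_ker).1 hx, sub_zero]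
    have h2 : (LinearMap.codRestrict P (1 - f) hcod) x = ⟨x, hx⟩ := Subtype.ext h1
    simp only [hydef, LinearMap.coe_comp, Function.comp_apply, Submodule.coe_subtype, h2]
  have hyran : ∀ x, Y x ∈ P := fun x => (y _).2
  have hc : Y * u ∈ jacobsonRadical (Module.End R M) := Ideal.mul_mem_left _ _ hu
  have hunit : IsUnit (Y * u + 1) := by
    have := mem_jacobsonRadical_iff.1 hc 1
    rwa [one_mul] at this
  obtain ⟨v, hv⟩ := hunit
  set z : Module.End R M := ↑v⁻¹ with hz
  have hz1 : (Y * u + 1) * z = 1 := by rw [← hv]; exact v.mul_inv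
  have hz2 : z * (Y * u + 1) = 1 := by rw [← hv]; exact v.inv_mul
  have hzP : ∀ x ∈ P, z x ∈ P := by
    intro x hx
    have hx1 : Y (u (z x)) + z x = x := by
      have h0 := DFunLike.congr_fun hz1 x
      simpa only [Module.End.mul_apply, LinearMap.add_apply, Module.End.one_apply] using h0
    rw [eq_sub_of_add_eq' hx1]
    exact P.sub_mem hx (hyran _)
  refine ⟨⟨y * u.restrict hP + 1, z.restrict hzP, ?_, ?_⟩, rfl⟩
  · ext x
    have hmain := DFunLike.congr_fun hz1 (↑x : M)
    simp only [Module.End.mul_apply, LinearMap.add_apply, Module.End.one_apply] at hmain ⊢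
    rw [Submodule.coe_add, LinearMap.restrict_coe_apply,
      show (↑(y ((u.restrict hP) ((z.restrict hzP) x))) : M) = Y (u (z ↑x)) from
        (hyP _ (hP _ (hzP ↑x x.2))).symm]
    exact hmain
  · ext x
    have hmain := DFunLike.congr_fun hz2 (↑x : M)
    simp only [Module.End.mul_apply, LinearMap.add_apply, Module.End.one_apply] at hmain ⊢
    have h3 : (↑(y ((u.restrict hP) x)) : M) = Y (u ↑x) := (hyP _ (hP _ x.2)).symm
    calc z ↑(y ((u.restrict hP) x) + x)
        = z (↑(y ((u.restrict hP) x)) + ↑x) := rfl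
      _ = z (Y (u ↑x) + ↑x) := by rw [h3]
      _ = ↑x := hmain

lemma mem_jac_of_parts {P Q : Submodule R M} (h : IsCompl P Q)
    {u : Module.End R M} (huP : ∀ x ∈ P, u x ∈ P) (huQ : ∀ x ∈ Q, u x ∈ Q)
    (h1 : u.restrict huP ∈ jacobsonRadical (Module.End R P))
    (h2 : u.restrict huQ ∈ jacobsonRadical (Module.End R Q)) :
    u ∈ jacobsonRadical (Module.End R M) := by
  set p : Module.End R M := P.subtype ∘ₗ P.linearProjOfIsCompl Q h with hp
  set q : Module.End R M := Q.subtype ∘ₗ Q.linearProjOfIsCompl P h.symm with hq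
  have hpP : ∀ x ∈ P, p x = x := fun x hx => by
    simp [Submodule.linearProjOfIsCompl, hp, Submodule.projectionOnto_apply_of_mem_left h hx, Submodule.projection_apply_of_mem_left h hx]
  have hpQ : ∀ x ∈ Q, p x = 0 := fun x hx => by
    simp [Submodule.linearProjOfIsCompl, hp, Submodule.projectionOnto_apply_of_mem_right h hx, Submodule.projection_apply_of_mem_right h hx]
  have hqQ : ∀ x ∈ Q, q x = x := fun x hx => by
    simp [Submodule.linearProjOfIsCompl, hq, Submodule.projectionOnto_apply_of_mem_left h.symm hx, Submodule.projection_apply_of_mem_left h.symm hx]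
  have hqP : ∀ x ∈ P, q x = 0 := fun x hx => by
    simp [Submodule.linearProjOfIsCompl, hq, Submodule.projectionOnto_apply_of_mem_right h.symm hx, Submodule.projection_apply_of_mem_right h.symm hx]
  have hsum : p + q = 1 := by
    refine ext_on_compl h (fun x hx => ?_) (fun x hx => ?_)
    · rw [LinearMap.add_apply, hpP x hx, hqP x hx, add_zero, Module.End.one_apply]
    · rw [LinearMap.add_apply, hpQ x hx, hqQ x hx, zero_add, Module.End.one_apply]
  have hupP : ∀ x, (u * p) x ∈ P := fun x => huP _ (P.linearProjOfIsCompl Q h x).2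
  have huqQ : ∀ x, (u * q) x ∈ Q := fun x => huQ _ (Q.linearProjOfIsCompl P h.symm x).2
  have hw1 : u * p ∈ jacobsonRadical (Module.End R M) := by
    refine mem_jac_of_corner h hupP (fun x hx => ?_) ?_
    · rw [Module.End.mul_apply, hpQ x hx, map_zero]
    · have : (u * p).restrict (fun x _ => hupP x) = u.restrict huP := by
        refine restrict_eq_restrict _ _ (fun x hx => ?_)
        rw [Module.End.mul_apply, hpP x hx]
      rw [this]; exact h1
  have hw2 : u * q ∈ jacobsonRadical (Module.End R M) := by
    refine mem_jac_of_corner h.symm huqQ (fun x hx => ?_) ?_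
    · rw [Module.End.mul_apply, hqP x hx, map_zero]
    · have : (u * q).restrict (fun x _ => huqQ x) = u.restrict huQ := by
        refine restrict_eq_restrict _ _ (fun x hx => ?_)
        rw [Module.End.mul_apply, hqQ x hx]
      rw [this]; exact h2
  have : u = u * p + u * q := by rw [← mul_add, hsum, mul_one]
  rw [this]
  exact Ideal.add_mem _ hw1 hw2

end CoreLemmas

/-- an endomorphism `α` of `M` is strongly `J^#`-clean iff `M = P ⊕ Q`
with `P, Q` both `α`-invariant, `α|_P ∈ J^#(End(P))` and `(1 - α)|_Q ∈ J^#(End(Q))`. -/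
theorem stronglyJsharpClean_end_iff {R M : Type*} [Ring R] [AddCommGroup M] [Module R M]
    (α : Module.End R M) :
    IsStronglyJsharpClean α ↔
      ∃ P Q : Submodule R M, IsCompl P Q ∧
        ∃ (hP : ∀ x ∈ P, α x ∈ P) (_ : ∀ x ∈ Q, α x ∈ Q)
          (hQ : ∀ x ∈ Q, (1 - α) x ∈ Q),
          (α.restrict hP ∈ Jsharp (Module.End R P)) ∧
          ((1 - α).restrict hQ ∈ Jsharp (Module.End R Q)) := by
  constructor
  · rintro ⟨e, he, ⟨n, hn, hJn⟩, hcomm⟩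
    have inv : ∀ f g : Module.End R M, f * g = g * f →
        ∀ x ∈ LinearMap.ker f, g x ∈ LinearMap.ker f := by
      intro f g hfg x hx
      rw [LinearMap.mem_ker] at hx ⊢
      rw [← Module.End.mul_apply, hfg, Module.End.mul_apply, hx, map_zero]
    have hee : ∀ x, e (e x) = e x := fun x => by rw [← Module.End.mul_apply, he.eq]
    have hcompl : IsCompl (LinearMap.ker e) (LinearMap.ker (1 - e)) := by
      constructor
      · rw [Submodule.disjoint_def]
        intro x hx1 hx2
        rw [LinearMap.mem_ker] at hx1
        rw [LinearMap.mem_ker, LinearMap.sub_apply, Module.End.one_apply] at hx2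
        rw [(sub_eq_zero.1 hx2), hx1]
      · rw [codisjoint_iff, eq_top_iff]
        intro x _
        have h1 : x - e x ∈ LinearMap.ker e := by
          rw [LinearMap.mem_ker, map_sub, hee, sub_self]
        have h2 : e x ∈ LinearMap.ker (1 - e) := by
          rw [LinearMap.mem_ker, LinearMap.sub_apply, Module.End.one_apply, hee, sub_self]
        exact Submodule.mem_sup.2 ⟨x - e x, h1, e x, h2, by abel⟩
    have hPinv : ∀ x ∈ LinearMap.ker e, α x ∈ LinearMap.ker e := inv e α hcomm
    have hcomm2 : (1 - e) * α = α * (1 - e) := by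
      rw [sub_mul, one_mul, mul_sub, mul_one, hcomm]
    have hQinvα : ∀ x ∈ LinearMap.ker (1 - e), α x ∈ LinearMap.ker (1 - e) :=
      inv (1 - e) α hcomm2
    have hcomm3 : (1 - e) * (1 - α) = (1 - α) * (1 - e) := by
      simp only [mul_sub, sub_mul, one_mul, mul_one, hcomm]; abel
    have hQinv : ∀ x ∈ LinearMap.ker (1 - e), (1 - α) x ∈ LinearMap.ker (1 - e) :=
      inv (1 - e) (1 - α) hcomm3
    refine ⟨LinearMap.ker e, LinearMap.ker (1 - e), hcompl, hPinv, hQinvα, hQinv,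
      ⟨n, hn, ?_⟩, ⟨n, hn, ?_⟩⟩
    · have hae : ∀ x ∈ LinearMap.ker e, (α - e) x ∈ LinearMap.ker e :=
        inv e (α - e) (by simp only [mul_sub, sub_mul, hcomm])
      have hstep : α.restrict hPinv = (α - e).restrict hae :=
        restrict_eq_restrict _ _ (fun x hx =>
          (by rw [LinearMap.sub_apply, LinearMap.mem_ker.1 hx, sub_zero] :
            (α - e) x = α x).symm)
      rw [hstep, Module.End.pow_restrict]
      exact restrict_mem_jac he hJn _
    · have hJn2 : (e - α) ^ n ∈ jacobsonRadical (Module.End R M) := by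
        rw [show e - α = -(α - e) from (neg_sub _ _).symm, neg_pow]
        exact Ideal.mul_mem_left _ _ hJn
      have hbe : ∀ x ∈ LinearMap.ker (1 - e), (e - α) x ∈ LinearMap.ker (1 - e) :=
        inv (1 - e) (e - α)
          (by simp only [mul_sub, sub_mul, one_mul, mul_one, he.eq, hcomm]; abel)
      have hstep2 : (1 - α).restrict hQinv = (e - α).restrict hbe := by
        refine restrict_eq_restrict _ _ (fun x hx => ?_)
        have hex : e x = x := by
          have h0 := LinearMap.mem_ker.1 hx
          rw [LinearMap.sub_apply, Module.End.one_apply] at h0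
          exact (sub_eq_zero.1 h0).symm
        rw [LinearMap.sub_apply, LinearMap.sub_apply, Module.End.one_apply, hex]
      rw [hstep2, Module.End.pow_restrict]
      exact restrict_mem_jac he.one_sub hJn2 _
  · rintro ⟨P, Q, h, hP, hQα, hQ, ⟨n, hn, h1⟩, ⟨m, hm, h2⟩⟩
    set e : Module.End R M := Q.subtype ∘ₗ Q.linearProjOfIsCompl P h.symm with hedef
    have heP : ∀ x ∈ P, e x = 0 := fun x hx => by
      simp [Submodule.linearProjOfIsCompl, hedef, Submodule.projectionOnto_apply_of_mem_right h.symm hx, Submodule.projection_apply_of_mem_right h.symm hx]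
    have heQ : ∀ x ∈ Q, e x = x := fun x hx => by
      simp [Submodule.linearProjOfIsCompl, hedef, Submodule.projectionOnto_apply_of_mem_left h.symm hx, Submodule.projection_apply_of_mem_left h.symm hx]
    have he : IsIdempotentElem e := by
      refine ext_on_compl h (fun x hx => ?_) (fun x hx => ?_)
      · rw [Module.End.mul_apply, heP x hx, map_zero]
      · rw [Module.End.mul_apply, heQ x hx]; exact heQ x hx
    have hcomm : e * α = α * e := by
      refine ext_on_compl h (fun x hx => ?_) (fun x hx => ?_)
      · rw [Module.End.mul_apply, Module.End.mul_apply, heP _ (hP x hx), heP x hx, map_zero]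
      · rw [Module.End.mul_apply, Module.End.mul_apply, heQ _ (hQα x hx), heQ x hx]
    have hvP : ∀ x ∈ P, (α - e) x ∈ P := fun x hx => by
      rw [LinearMap.sub_apply, heP x hx, sub_zero]; exact hP x hx
    have hvQ : ∀ x ∈ Q, (α - e) x ∈ Q := fun x hx => by
      rw [LinearMap.sub_apply, heQ x hx]; exact Q.sub_mem (hQα x hx) hx
    refine ⟨e, he, ⟨n + m, by omega, ?_⟩, hcomm⟩
    have hwP : ∀ x ∈ P, ((α - e) ^ (n + m)) x ∈ P := fun x hx =>
      Module.End.pow_apply_mem_of_forall_mem _ hvP x hx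
    have hwQ : ∀ x ∈ Q, ((α - e) ^ (n + m)) x ∈ Q := fun x hx =>
      Module.End.pow_apply_mem_of_forall_mem _ hvQ x hx
    refine mem_jac_of_parts h hwP hwQ ?_ ?_
    · rw [← Module.End.pow_restrict _ hvP]
      have hres : (α - e).restrict hvP = α.restrict hP :=
        restrict_eq_restrict _ _ (fun x hx => by
          rw [LinearMap.sub_apply, heP x hx, sub_zero])
      rw [hres, add_comm n m, pow_add]
      exact Ideal.mul_mem_left _ _ h1
    · rw [← Module.End.pow_restrict _ hvQ]
      have hres : (α - e).restrict hvQ = -((1 - α).restrict hQ) := by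
        ext x
        have hex : e ↑x = ↑x := heQ ↑x x.2
        simp only [LinearMap.restrict_coe_apply, LinearMap.sub_apply, Module.End.one_apply,
          LinearMap.neg_apply, Submodule.coe_neg, hex]
        abel
      rw [hres]
      have hnp := neg_pow ((1 - α).restrict hQ) (n + m)
      rw [hnp]
      refine Ideal.mul_mem_left _ _ ?_
      rw [pow_add]
      exact Ideal.mul_mem_left _ _ h2
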